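/- The quotient of a torus by any closed subgroup is again a torus: if S is a closed additive subgroup of the k-dimensional torus T^k = (ℝ/ℤ)^k, then there exists a nonnegative integer k' such that the quotient topological group T^k/S is isomorphic as a topological group to the torus T^{k'} = (ℝ/ℤ)^{k'}. -/

import Mathlib

set_option maxHeartbeats 1000000

open Function Set Module Submodule

section Generic

variable {G K : Type*} [AddCommGroup G] [TopologicalSpace G] [IsTopologicalAddGroup G]
  [AddCommGroup K] [TopologicalSpace K] [IsTopologicalAddGroup K]

/-- A continuous, open, surjective additive group hom induces a topological group
isomorphism from the quotient by its kernel. -/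
theorem exists_topAddEquiv_of_isOpenQuotientMap (f : G →+ K) (N : AddSubgroup G)
    (hker : f.ker = N) (hf : IsOpenQuotientMap (f : G → K)) :
    ∃ e : G ⧸ N ≃+ K, Continuous e ∧ Continuous e.symm := by
  subst hker
  set φ : G ⧸ f.ker →+ K := QuotientAddGroup.lift f.ker f (fun x hx => hx)
  have hφmk : ∀ x : G, φ ((x : G ⧸ f.ker)) = f x := fun x => rfl
  have hinj : Function.Injective φ := by
    rw [injective_iff_map_eq_zero]
    intro q hq
    induction q using QuotientAddGroup.induction_on with
    | H x => exact (QuotientAddGroup.eq_zero_iff x).mpr (by simpa [hφmk] using hq)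
  have hsurj : Function.Surjective φ := fun y => by
    obtain ⟨x, hx⟩ := hf.surjective y
    exact ⟨x, hx⟩
  refine ⟨AddEquiv.ofBijective φ ⟨hinj, hsurj⟩, ?_, ?_⟩
  · rw [QuotientAddGroup.isOpenQuotientMap_mk.isQuotientMap.continuous_iff]
    exact hf.continuous
  · rw [hf.isQuotientMap.continuous_iff]
    have : ((AddEquiv.ofBijective φ ⟨hinj, hsurj⟩).symm ∘ f) =
        (QuotientAddGroup.mk : G → G ⧸ f.ker) := by
      funext x
      exact (AddEquiv.symm_apply_eq _).mpr rfl
    rw [this]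
    exact continuous_quot_mk

end Generic

/-- **Quotients of tori are tori.**
The quotient of the torus `T^k = (ℝ/ℤ)^k` by any closed subgroup `S` is again a
torus: there is `k'` such that `T^k / S` is isomorphic, as a topological group,
to `(ℝ/ℤ)^{k'}`. -/
theorem quotient_of_torus_by_closed_subgroup_iso_torus
    (k : ℕ) (S : AddSubgroup (Fin k → AddCircle (1 : ℝ)))
    (hS : IsClosed (S : Set (Fin k → AddCircle (1 : ℝ)))) :
    ∃ (k' : ℕ) (e : (Fin k → AddCircle (1 : ℝ)) ⧸ S ≃+ (Fin k' → AddCircle (1 : ℝ))),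
      Continuous e ∧ Continuous e.symm := by
  classical
  set E := Fin k → ℝ with hE
  -- the projection `ℝ^k → T^k`
  set p : E →+ (Fin k → AddCircle (1 : ℝ)) :=
    AddMonoidHom.mk' (fun x i => (x i : AddCircle (1 : ℝ)))
      (by intro a b; funext i; push_cast; rfl) with hp
  have hpOQ : IsOpenQuotientMap (p : E → (Fin k → AddCircle (1 : ℝ))) :=
    IsOpenQuotientMap.piMap (fun _ => QuotientAddGroup.isOpenQuotientMap_mk)
  -- the lift of `S` to `ℝ^k`
  set H : AddSubgroup E := S.comap p with hHdef
  have hH : IsClosed (H : Set E) := hS.preimage hpOQ.continuous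
  -- the "linear part" of `H`
  set V : Submodule ℝ E :=
    { carrier := {x : E | ∀ t : ℝ, t • x ∈ H}
      add_mem' := fun {a b} ha hb t => by
        rw [smul_add]; exact H.add_mem (ha t) (hb t)
      zero_mem' := fun t => by rw [smul_zero]; exact H.zero_mem
      smul_mem' := fun c {x} hx t => by
        rw [smul_smul]; exact hx (t * c) } with hVdef
  have hVH : ∀ x ∈ V, x ∈ H := fun x hx => by simpa using hx 1
  obtain ⟨W, hW⟩ := Submodule.exists_isCompl V
  -- the projections onto `W` and `V`
  set πW : E →ₗ[ℝ] W := W.linearProjOfIsCompl V hW.symm with hπW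
  set πV : E →ₗ[ℝ] V := V.linearProjOfIsCompl W hW with hπV
  have hsum : ∀ x : E, (πV x : E) + (πW x : E) = x := fun x =>
    Submodule.projection_add_projection_eq_self hW x
  have hπWmem : ∀ x ∈ H, (πW x : E) ∈ H := by
    intro x hx
    have : (πW x : E) = x - (πV x : E) := by rw [eq_sub_iff_add_eq, add_comm]; exact hsum x
    rw [this]
    exact H.sub_mem hx (hVH _ (πV x).2)
  -- the lattice `L = H ∩ W`, inside `W`
  set L : Submodule ℤ W :=
    AddSubgroup.toIntSubmodule (H.comap (W.subtype.toAddMonoidHom)) with hLdef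
  have hLmem : ∀ w : W, w ∈ L ↔ (w : E) ∈ H := fun w => Iff.rfl
  -- discreteness of `L`
  have hsep : ∃ ε > 0, ∀ x : E, x ∈ H → x ∈ W → ‖x‖ < ε → x = 0 := by
    by_contra hcon
    push_neg at hcon
    have hex : ∀ n : ℕ, ∃ x : E, x ∈ H ∧ x ∈ W ∧ ‖x‖ < 1 / (n + 1) ∧ x ≠ 0 := by
      intro n
      obtain ⟨x, hxH, hxW, hxn, hxne⟩ := hcon (1 / (n + 1)) (by positivity)
      exact ⟨x, hxH, hxW, hxn, hxne⟩
    choose w hwH hwW hwlt hwne using hex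
    have hwnorm : ∀ n, ‖w n‖ ≠ 0 := fun n => norm_ne_zero_iff.mpr (hwne n)
    set u : ℕ → E := fun n => ‖w n‖⁻¹ • w n with hu
    have hunorm : ∀ n, ‖u n‖ = 1 := by
      intro n
      rw [hu, norm_smul, norm_inv, norm_norm, inv_mul_cancel₀ (hwnorm n)]
    have huW : ∀ n, u n ∈ W := fun n => W.smul_mem _ (hwW n)
    have hK : IsCompact (Metric.sphere (0 : E) 1 ∩ (W : Set E)) :=
      (isCompact_sphere 0 1).inter_right W.closed_of_finiteDimensional
    have huK : ∀ n, u n ∈ Metric.sphere (0 : E) 1 ∩ (W : Set E) := fun n =>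
      ⟨by simpa [mem_sphere_iff_norm] using hunorm n, huW n⟩
    obtain ⟨u₀, hu₀K, φ, hφ, hconv⟩ := hK.tendsto_subseq huK
    have hu₀V : u₀ ∈ V := by
      intro t
      set c : ℕ → ℝ := fun n => (⌊t * ‖w n‖⁻¹⌋ : ℝ) * ‖w n‖ with hc
      have hcu : ∀ n, c n • u n ∈ H := by
        intro n
        have : c n • u n = (⌊t * ‖w n‖⁻¹⌋ : ℤ) • w n := by
          rw [hc, hu, smul_smul, mul_assoc, mul_inv_cancel₀ (hwnorm n), mul_one,
            Int.cast_smul_eq_zsmul]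
        rw [this]
        exact AddSubgroup.zsmul_mem H (hwH n) _
      have hct : Filter.Tendsto c Filter.atTop (nhds t) := by
        have hbound : ∀ n, |c n - t| ≤ 1 / (n + 1) := by
          intro n
          have h1 : c n - t = (↑⌊t * ‖w n‖⁻¹⌋ - t * ‖w n‖⁻¹) * ‖w n‖ := by
            have ht : t * ‖w n‖⁻¹ * ‖w n‖ = t := by
              rw [mul_assoc, inv_mul_cancel₀ (hwnorm n), mul_one]
            rw [hc, sub_mul, ht]
          have h2 : |(↑⌊t * ‖w n‖⁻¹⌋ - t * ‖w n‖⁻¹)| ≤ 1 := by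
            rw [abs_sub_comm, abs_of_nonneg (Int.fract_nonneg _)]
            exact (Int.fract_lt_one _).le
          calc |c n - t| = |(↑⌊t * ‖w n‖⁻¹⌋ - t * ‖w n‖⁻¹)| * ‖w n‖ := by
                rw [h1, abs_mul, abs_of_nonneg (norm_nonneg _)]
            _ ≤ 1 * ‖w n‖ := by
                exact mul_le_mul_of_nonneg_right h2 (norm_nonneg _)
            _ ≤ 1 / (n + 1) := by rw [one_mul]; exact (hwlt n).le
        rw [tendsto_iff_dist_tendsto_zero]
        refine squeeze_zero (fun n => dist_nonneg) (fun n => ?_)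
          tendsto_one_div_add_atTop_nhds_zero_nat
        simpa [Real.dist_eq] using hbound n
      have hlim : Filter.Tendsto (fun n => c (φ n) • u (φ n)) Filter.atTop (nhds (t • u₀)) :=
        Filter.Tendsto.smul (hct.comp hφ.tendsto_atTop) hconv
      exact hH.mem_of_tendsto hlim (Filter.Eventually.of_forall fun n => hcu (φ n))
    have hu₀0 : u₀ = 0 := by
      have := hW.disjoint.le_bot (⟨hu₀V, hu₀K.2⟩ : u₀ ∈ V ⊓ W)
      simpa using this
    have : ‖u₀‖ = 1 := by simpa [mem_sphere_iff_norm] using hu₀K.1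
    rw [hu₀0] at this
    simp at this
  obtain ⟨ε, hε, hsepε⟩ := hsep
  have hLdisc : DiscreteTopology L := by
    refine discreteTopology_iff_isOpen_singleton_zero.mpr ?_
    have : {(0 : L)} = ((↑) : L → W) ⁻¹' (Metric.ball (0 : W) ε) := by
      ext x
      simp only [Set.mem_singleton_iff, Set.mem_preimage, Metric.mem_ball, dist_zero_right]
      constructor
      · rintro rfl; simpa using hε
      · intro hx
        have hx' : ‖((x : W) : E)‖ < ε := hx
        have := hsepε ((x : W) : E) ((hLmem _).mp x.2) (x : W).2 hx'
        exact Subtype.ext (Subtype.ext this)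
    rw [this]
    exact Metric.isOpen_ball.preimage continuous_subtype_val
  -- the standard `ℤ^k` is contained in `H`, hence `H` spans `E`
  have hZH : ∀ i : Fin k, Pi.basisFun ℝ (Fin k) i ∈ H := by
    intro i
    have : p (Pi.basisFun ℝ (Fin k) i) = 0 := by
      funext j
      show ((Pi.basisFun ℝ (Fin k) i : E) j : AddCircle (1 : ℝ)) = 0
      by_cases hij : j = i
      · subst hij
        simp [Pi.basisFun_apply]
      · simp [Pi.basisFun_apply, Pi.single_apply, Ne.symm hij]
    exact (AddSubgroup.mem_comap).mpr (by rw [this]; exact S.zero_mem)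
  have hspanH : Submodule.span ℝ (H : Set E) = ⊤ := by
    rw [eq_top_iff, ← (Pi.basisFun ℝ (Fin k)).span_eq]
    exact Submodule.span_le.mpr (fun x ⟨i, hi⟩ => hi ▸ Submodule.subset_span (hZH i))
  -- `L` spans `W`
  have hLspan : Submodule.span ℝ (L : Set W) = ⊤ := by
    set M : Submodule ℝ E := Submodule.map W.subtype
      (Submodule.span ℝ ((L : Set W) : Set W)) with hM
    have hMW : M ≤ W := by
      rw [hM]
      exact (Submodule.map_mono le_top).trans (by rw [Submodule.map_top, Submodule.range_subtype])
    have hHsub : (H : Set E) ⊆ (V ⊔ M : Submodule ℝ E) := by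
      intro x hx
      have h1 : (πV x : E) ∈ V := (πV x).2
      have h2 : (πW x : E) ∈ M := by
        refine ⟨πW x, Submodule.subset_span ?_, rfl⟩
        exact (hLmem _).mpr (hπWmem x hx)
      have := Submodule.add_mem_sup h1 h2
      rwa [hsum x] at this
    have htop : V ⊔ M = ⊤ := by
      rw [eq_top_iff, ← hspanH]
      exact Submodule.span_le.mpr hHsub
    rw [eq_top_iff]
    rintro ww -
    have hx : (ww : E) ∈ V ⊔ M := htop ▸ Submodule.mem_top
    obtain ⟨v, hv, mm, hm, hvm⟩ := Submodule.mem_sup.mp hx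
    have hvW : v ∈ W := by
      have hmW : mm ∈ W := hMW hm
      have : v = (ww : E) - mm := by rw [eq_sub_iff_add_eq]; exact hvm
      rw [this]; exact W.sub_mem ww.2 hmW
    have hv0 : v = 0 := by
      have := hW.disjoint.le_bot (⟨hv, hvW⟩ : v ∈ V ⊓ W)
      simpa using this
    have hxm : (ww : E) = mm := by rw [hv0, zero_add] at hvm; exact hvm.symm
    obtain ⟨y, hy, hyx⟩ := hm
    have hwy : ww = y := Subtype.ext (by rw [hxm, ← hyx]; rfl)
    rw [hwy]
    exact hy
  have hZL : IsZLattice ℝ L := ⟨hLspan⟩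
  -- choose a `ℤ`-basis of `L`
  have hfree : Module.Free ℤ L := ZLattice.module_free ℝ L
  have hfin : Module.Finite ℤ L := ZLattice.module_finite ℝ L
  have hfintype : Fintype (Module.Free.ChooseBasisIndex ℤ L) :=
    Module.Free.ChooseBasisIndex.fintype ℤ L
  set ι := Module.Free.ChooseBasisIndex ℤ L
  set k' : ℕ := Fintype.card ι with hk'
  set b : Basis (Fin k') ℤ L := (Module.Free.chooseBasis ℤ L).reindex (Fintype.equivFin ι)
  set B : Basis (Fin k') ℝ W := b.ofZLatticeBasis ℝ L with hB
  -- the linear map `ℝ^k → ℝ^{k'}`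
  set ℓ : E →ₗ[ℝ] (Fin k' → ℝ) := (B.equivFun : W →ₗ[ℝ] (Fin k' → ℝ)).comp πW with hℓ
  have hℓsurj : Function.Surjective ℓ := by
    intro y
    refine ⟨(B.equivFun.symm y : W), ?_⟩
    have hproj : πW ((B.equivFun.symm y : W) : E) = B.equivFun.symm y :=
      Submodule.linearProjOfIsCompl_apply_left hW.symm _
    have h2 : ℓ ((B.equivFun.symm y : W) : E)
        = B.equivFun (πW ((B.equivFun.symm y : W) : E)) := rfl
    rw [h2, hproj, LinearEquiv.apply_symm_apply]
  have hℓcont : Continuous ℓ := ℓ.continuous_of_finiteDimensional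
  have hℓopen : IsOpenMap ℓ := by
    have := ContinuousLinearMap.isOpenMap (𝕜 := ℝ)
      ⟨ℓ, hℓcont⟩ hℓsurj
    exact this
  set p' : (Fin k' → ℝ) →+ (Fin k' → AddCircle (1 : ℝ)) :=
    AddMonoidHom.mk' (fun x i => (x i : AddCircle (1 : ℝ)))
      (by intro a b; funext i; push_cast; rfl) with hp'
  have hp'OQ : IsOpenQuotientMap (p' : (Fin k' → ℝ) → (Fin k' → AddCircle (1 : ℝ))) :=
    IsOpenQuotientMap.piMap (fun _ => QuotientAddGroup.isOpenQuotientMap_mk)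
  set g₂ : E →+ (Fin k' → AddCircle (1 : ℝ)) := p'.comp ℓ.toAddMonoidHom with hg₂
  have hg₂OQ : IsOpenQuotientMap (g₂ : E → (Fin k' → AddCircle (1 : ℝ))) :=
    hp'OQ.comp ⟨hℓsurj, hℓcont, hℓopen⟩
  -- kernel of `g₂` is `H`
  have hg₂ker : g₂.ker = H := by
    ext x
    have hcoords : g₂ x = 0 ↔ ∀ i, ∃ n : ℤ, (n : ℝ) = B.repr (πW x) i := by
      constructor
      · intro h i
        have : ((ℓ x i : ℝ) : AddCircle (1 : ℝ)) = 0 := congrFun h i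
        obtain ⟨n, hn⟩ := (AddCircle.coe_eq_zero_iff (1 : ℝ)).mp this
        exact ⟨n, by simpa [hℓ, Basis.equivFun_apply] using hn⟩
      · intro h
        funext i
        obtain ⟨n, hn⟩ := h i
        show ((ℓ x i : ℝ) : AddCircle (1 : ℝ)) = 0
        rw [AddCircle.coe_eq_zero_iff (1 : ℝ)]
        exact ⟨n, by simpa [hℓ, Basis.equivFun_apply] using hn⟩
    have hmemL : (∀ i, ∃ n : ℤ, (n : ℝ) = B.repr (πW x) i) ↔ πW x ∈ L := by
      rw [← b.ofZLatticeBasis_span ℝ, ← hB]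
      rw [Basis.mem_span_iff_repr_mem]
      constructor
      · intro h i
        obtain ⟨n, hn⟩ := h i
        exact ⟨n, hn⟩
      · intro h i
        obtain ⟨n, hn⟩ := h i
        exact ⟨n, hn⟩
    constructor
    · intro hx
      have hπ : (πW x : E) ∈ H := (hLmem _).mp (hmemL.mp (hcoords.mp hx))
      have : x = (πV x : E) + (πW x : E) := (hsum x).symm
      rw [this]
      exact H.add_mem (hVH _ (πV x).2) hπ
    · intro hx
      exact hcoords.mpr (hmemL.mpr ((hLmem _).mpr (hπWmem x hx)))
  -- the map `ℝ^k → T^k/S`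
  set g₁ : E →+ ((Fin k → AddCircle (1 : ℝ)) ⧸ S) := (QuotientAddGroup.mk' S).comp p with hg₁
  have hg₁OQ : IsOpenQuotientMap (g₁ : E → ((Fin k → AddCircle (1 : ℝ)) ⧸ S)) :=
    QuotientAddGroup.isOpenQuotientMap_mk.comp hpOQ
  have hg₁ker : g₁.ker = H := by
    ext x
    simp only [hg₁, AddMonoidHom.mem_ker, AddMonoidHom.comp_apply, QuotientAddGroup.mk'_apply,
      QuotientAddGroup.eq_zero_iff]
    rfl
  obtain ⟨e₁, he₁, he₁s⟩ := exists_topAddEquiv_of_isOpenQuotientMap g₁ H hg₁ker hg₁OQ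
  obtain ⟨e₂, he₂, he₂s⟩ := exists_topAddEquiv_of_isOpenQuotientMap g₂ H hg₂ker hg₂OQ
  exact ⟨k', e₁.symm.trans e₂, he₂.comp he₁s, he₁.comp he₂s⟩
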